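/- With notation as above, let Φ: u⁺ → u⁻ be the linear map sending E_{in} to E_{ni} for 1 ≤ i ≤ p and E_{in} to −E_{ni} for p+1 ≤ i ≤ n−1, and for ξ ∈ R let u^ξ = (Id + ξΦ)(u⁺). Then Φ is an isomorphism of h-modules, i.e., Φ([X, Y]) = [X, Φ(Y)] for all X ∈ h and Y ∈ u⁺. -/

import Mathlib

open scoped Matrix

/-- The degenerate diagonal matrix `diag(1,…,1,−1,…,−1,0)` (`p` ones, then `−1`s, then `0` in
the last slot), representing the standard form of signature `(p, q−1)` on the first `n−1`
coordinates of `ℝ^n`. -/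
noncomputable def Jmat (n p : ℕ) : Matrix (Fin n) (Fin n) ℝ :=
  Matrix.diagonal fun i => if (i : ℕ) = n - 1 then 0 else if (i : ℕ) < p then 1 else -1

/-- The subalgebra `h` of `sl_n(ℝ)`: matrices `[[A,0],[0,0]]` with `A ∈ so(p, q−1)`. -/
noncomputable def hSet (n p : ℕ) : Set (Matrix (Fin n) (Fin n) ℝ) :=
  {X | Xᵀ * Jmat n p + Jmat n p * X = 0 ∧
    ∀ i j : Fin n, ((i : ℕ) = n - 1 ∨ (j : ℕ) = n - 1) → X i j = 0}

/-- `u⁺ = span{E_{in} : 1 ≤ i ≤ n−1}`: matrices supported on the last column, off the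
diagonal. -/
def uPlus (n : ℕ) : Set (Matrix (Fin n) (Fin n) ℝ) :=
  {X | ∀ i j : Fin n, ¬((j : ℕ) = n - 1 ∧ (i : ℕ) ≠ n - 1) → X i j = 0}

/-- `u⁻ = span{E_{ni} : 1 ≤ i ≤ n−1}`: matrices supported on the last row, off the
diagonal. -/
def uMinus (n : ℕ) : Set (Matrix (Fin n) (Fin n) ℝ) :=
  {X | ∀ i j : Fin n, ¬((i : ℕ) = n - 1 ∧ (j : ℕ) ≠ n - 1) → X i j = 0}

/-- The generator `E₁₁ + ⋯ + E_{n−1,n−1} − (n−1)E_{nn}` of the one-dimensional subspace `t`. -/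
noncomputable def tGen (n : ℕ) : Matrix (Fin n) (Fin n) ℝ :=
  Matrix.diagonal fun i => if (i : ℕ) = n - 1 then -((n : ℝ) - 1) else 1

/-- The line `t = ℝ·(E₁₁ + ⋯ + E_{n−1,n−1} − (n−1)E_{nn})`. -/
noncomputable def tSet (n : ℕ) : Set (Matrix (Fin n) (Fin n) ℝ) :=
  {X | ∃ c : ℝ, X = c • tGen n}

/-- The map `Φ : u⁺ → u⁻` sending `E_{in} ↦ E_{ni}` for `i ≤ p` and `E_{in} ↦ −E_{ni}` for
`i > p` (indices `1 ≤ i ≤ n−1`). -/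
noncomputable def phiMap (n p : ℕ) (X : Matrix (Fin n) (Fin n) ℝ) :
    Matrix (Fin n) (Fin n) ℝ :=
  Matrix.of fun i j =>
    if (i : ℕ) = n - 1 then
      if (j : ℕ) = n - 1 then 0 else (if (j : ℕ) < p then 1 else -1) * X j i
    else 0

/-- The subspace `u^ξ = (Id + ξΦ)(u⁺)`. -/
noncomputable def uXi (n p : ℕ) (ξ : ℝ) : Set (Matrix (Fin n) (Fin n) ℝ) :=
  {Z | ∃ Y ∈ uPlus n, Z = Y + ξ • phiMap n p Y}

/-- The sum `h ⊕ u ⊕ t` as a set of matrices. -/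
noncomputable def sumSet (n p : ℕ) (u : Set (Matrix (Fin n) (Fin n) ℝ)) :
    Set (Matrix (Fin n) (Fin n) ℝ) :=
  {X | ∃ A ∈ hSet n p, ∃ B ∈ u, ∃ C ∈ tSet n, X = A + B + C}

/-- `Φ : u⁺ → u⁻` is an isomorphism of `h`-modules: it maps `u⁺` bijectively
onto `u⁻` and intertwines the adjoint action, `Φ([X,Y]) = [X, Φ(Y)]` for `X ∈ h`,
`Y ∈ u⁺`. -/
theorem phi_h_module_isomorphism (n p q : ℕ) (hp : 1 ≤ p) (hq : 2 ≤ q)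
    (hn : p + q = n) :
    (∀ Y ∈ uPlus n, phiMap n p Y ∈ uMinus n) ∧
    (∀ Z ∈ uMinus n, ∃ Y ∈ uPlus n, phiMap n p Y = Z) ∧
    (∀ Y₁ ∈ uPlus n, ∀ Y₂ ∈ uPlus n, phiMap n p Y₁ = phiMap n p Y₂ → Y₁ = Y₂) ∧
    (∀ (Y₁ Y₂ : Matrix (Fin n) (Fin n) ℝ) (c : ℝ),
      phiMap n p (Y₁ + c • Y₂) = phiMap n p Y₁ + c • phiMap n p Y₂) ∧
    (∀ X ∈ hSet n p, ∀ Y ∈ uPlus n, phiMap n p ⁅X, Y⁆ = ⁅X, phiMap n p Y⁆) := by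
  have hn3 : 3 ≤ n := by omega
  have hlast : n - 1 < n := by omega
  set m : Fin n := ⟨n - 1, hlast⟩ with hm
  have hmval : (m : ℕ) = n - 1 := rfl
  refine ⟨?_, ?_, ?_, ?_, ?_⟩
  · -- maps into uMinus
    intro Y hY i j h
    simp only [phiMap, Matrix.of_apply]
    split_ifs <;> tauto
  · -- surjectivity
    intro Z hZ
    refine ⟨Matrix.of fun i j =>
      if (j : ℕ) = n - 1 ∧ (i : ℕ) ≠ n - 1 then
        (if (i : ℕ) < p then 1 else -1) * Z m i else 0, ?_, ?_⟩
    · intro i j h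
      simp only [Matrix.of_apply, if_neg h]
    · ext i j
      simp only [phiMap, Matrix.of_apply]
      by_cases hi : (i : ℕ) = n - 1
      · by_cases hj : (j : ℕ) = n - 1
        · rw [if_pos hi, if_pos hj]
          exact (hZ i j (by tauto)).symm
        · rw [if_pos hi, if_neg hj]
          have him : i = m := Fin.ext hi
          rw [him, if_pos (show ((m : ℕ) = n - 1 ∧ (j : ℕ) ≠ n - 1) from ⟨hmval, hj⟩)]
          split_ifs <;> ring
      · rw [if_neg hi]
        exact (hZ i j (by tauto)).symm
  · -- injectivity
    intro Y₁ h₁ Y₂ h₂ heq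
    ext i j
    by_cases h : (j : ℕ) = n - 1 ∧ (i : ℕ) ≠ n - 1
    · obtain ⟨hj, hi⟩ := h
      have hjm : j = m := Fin.ext hj
      have := congrFun (congrFun heq m) i
      simp only [phiMap, Matrix.of_apply, if_pos hmval, if_neg hi] at this
      have hε : (if (i : ℕ) < p then (1 : ℝ) else -1) ≠ 0 := by
        split_ifs <;> norm_num
      rw [hjm]
      exact mul_left_cancel₀ hε this
    · rw [h₁ i j h, h₂ i j h]
  · -- linearity
    intro Y₁ Y₂ c
    ext i j
    simp only [phiMap, Matrix.of_apply, Matrix.add_apply, Matrix.smul_apply, smul_eq_mul]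
    split_ifs <;> ring
  · -- intertwining
    intro X hX Y hY
    obtain ⟨hX1, hX2⟩ := hX
    have hskew : ∀ i j : Fin n,
        X j i * (if (j : ℕ) = n - 1 then 0 else if (j : ℕ) < p then (1 : ℝ) else -1) +
        (if (i : ℕ) = n - 1 then 0 else if (i : ℕ) < p then (1 : ℝ) else -1) * X i j = 0 := by
      intro i j
      have := congrFun (congrFun hX1 i) j
      simpa [Jmat, Matrix.add_apply, Matrix.mul_diagonal, Matrix.diagonal_mul,
        Matrix.transpose_apply] using this
    have hXlast : ∀ i j : Fin n, ((i : ℕ) = n - 1 ∨ (j : ℕ) = n - 1) → X i j = 0 := hX2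
    ext i j
    rw [Ring.lie_def, Ring.lie_def]
    simp only [phiMap, Matrix.of_apply, Matrix.sub_apply, Matrix.mul_apply]
    by_cases hi : (i : ℕ) = n - 1
    · rw [if_pos hi]
      have him : i = m := Fin.ext hi
      by_cases hj : (j : ℕ) = n - 1
      · rw [if_pos hj]
        have e1 : ∀ k : Fin n, X i k * (if (k : ℕ) = n - 1 then
            (if (j : ℕ) = n - 1 then 0 else (if (j : ℕ) < p then (1:ℝ) else -1) * Y j k)
            else 0) = 0 := fun k => by rw [hXlast i k (Or.inl hi)]; ring
        rw [Finset.sum_congr rfl (fun k _ => e1 k), Finset.sum_const_zero]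
        have e2 : ∀ k : Fin n, (if (i : ℕ) = n - 1 then
            (if (k : ℕ) = n - 1 then 0 else (if (k : ℕ) < p then (1:ℝ) else -1) * Y k i)
            else 0) * X k j = 0 := fun k => by rw [hXlast k j (Or.inr hj)]; ring
        rw [Finset.sum_congr rfl (fun k _ => e2 k), Finset.sum_const_zero]
        ring
      · rw [if_neg hj]
        have hYsupp : ∀ a b : Fin n, ¬((b : ℕ) = n - 1 ∧ (a : ℕ) ≠ n - 1) → Y a b = 0 := hY
        have hYX : ∀ k : Fin n, Y j k * X k i = 0 := by
          intro k
          by_cases hk : (k : ℕ) = n - 1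
          · rw [hXlast k i (Or.inr hi)]; ring
          · rw [hYsupp j k (by tauto)]; ring
        have hXPhi : ∀ k : Fin n, X i k * (if (k : ℕ) = n - 1 then
            (if (j : ℕ) = n - 1 then 0 else (if (j : ℕ) < p then (1:ℝ) else -1) * Y j k)
            else 0) = 0 := fun k => by rw [hXlast i k (Or.inl hi)]; ring
        rw [Finset.sum_congr rfl (fun k _ => hXPhi k), Finset.sum_const_zero]
        rw [show (∑ x, Y j x * X x i) = 0 from by
          rw [Finset.sum_congr rfl (fun k _ => hYX k), Finset.sum_const_zero]]
        have hterm : ∀ k : Fin n,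
            (if (j : ℕ) < p then (1:ℝ) else -1) * (X j k * Y k i)
            = - ((if (i : ℕ) = n - 1 then
                (if (k : ℕ) = n - 1 then 0 else (if (k : ℕ) < p then (1:ℝ) else -1) * Y k i)
                else 0) * X k j) := by
          intro k
          rw [if_pos hi]
          by_cases hk : (k : ℕ) = n - 1
          · rw [if_pos hk, hXlast j k (Or.inr hk)]; ring
          · rw [if_neg hk]
            have hs := hskew k j
            rw [if_neg hj, if_neg hk] at hs
            have h' : X j k * (if (j : ℕ) < p then (1:ℝ) else -1)
                = -((if (k : ℕ) < p then (1:ℝ) else -1) * X k j) := by linarith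
            calc (if (j : ℕ) < p then (1:ℝ) else -1) * (X j k * Y k i)
                = (X j k * (if (j : ℕ) < p then (1:ℝ) else -1)) * Y k i := by ring
              _ = -((if (k : ℕ) < p then (1:ℝ) else -1) * X k j) * Y k i := by rw [h']
              _ = -((if (k : ℕ) < p then (1:ℝ) else -1) * Y k i * X k j) := by ring
        calc (if (j : ℕ) < p then (1:ℝ) else -1) * ((∑ k, X j k * Y k i) - 0)
            = ∑ k, (if (j : ℕ) < p then (1:ℝ) else -1) * (X j k * Y k i) := by
              rw [sub_zero, Finset.mul_sum]
          _ = ∑ k : Fin n, - ((if (i : ℕ) = n - 1 then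
                (if (k : ℕ) = n - 1 then 0 else (if (k : ℕ) < p then (1:ℝ) else -1) * Y k i)
                else 0) * X k j) := Finset.sum_congr rfl (fun k _ => hterm k)
          _ = _ := by rw [zero_sub (G := ℝ)]; exact Finset.sum_neg_distrib (G := ℝ) _
    · rw [if_neg hi]
      have h1 : ∀ k : Fin n, X i k * (if (k : ℕ) = n - 1 then
          (if (j : ℕ) = n - 1 then 0 else (if (j : ℕ) < p then (1:ℝ) else -1) * Y j k)
          else 0) = 0 := by
        intro k
        by_cases hk : (k : ℕ) = n - 1
        · rw [hXlast i k (Or.inr hk)]; ring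
        · rw [if_neg hk]; ring
      have h2 : ∀ k : Fin n, (if (i : ℕ) = n - 1 then
          (if (k : ℕ) = n - 1 then 0 else (if (k : ℕ) < p then (1:ℝ) else -1) * Y k i)
          else 0) * X k j = 0 := fun k => by rw [if_neg hi]; ring
      rw [Finset.sum_congr rfl (fun k _ => h1 k), Finset.sum_congr rfl (fun k _ => h2 k)]
      simp
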